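/- Let R be a commutative ring, let F and A be Lie algebras over R, let φ : F → F be a Lie algebra homomorphism with φ ∘ φ = φ, and let θ : F → A be a Lie algebra homomorphism. Define ψ : F → A × A by ψ(f) = (θ(φ f), θ f). Equip A × A with the operations (u,v) ⊢ (u',v') := (⁅u,u'⁆, ⁅u,v'⁆), (u,v) ⊣ (u',v') := (⁅u,u'⁆, ⁅v,u'⁆), (u,v) ⊥ (u',v') := (⁅u,u'⁆, ⁅v,v'⁆). Then for all f, g ∈ F: ψ(⁅φ(f), g⁆) = ψ(f) ⊢ ψ(g), ψ(⁅f, φ(g)⁆) = ψ(f) ⊣ ψ(g), and ψ(⁅f, g⁆) = ψ(f) ⊥ ψ(g). -/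
import Mathlib


/-- If `φ` is a homomorphic averaging operator on a Lie algebra `F` and
`θ : F → A` is a Lie algebra homomorphism, then `ψ : f ↦ (θ (φ f), θ f)` is a homomorphism of
tri-algebras from `F` (with operations `⁅φ ·, ·⁆`, `⁅·, φ ·⁆`, `⁅·, ·⁆`) to `C₂ ⊗ A ≃ A × A`
(with the product tri-algebra operations). -/
theorem psi_trialgebra_hom_lie (R : Type*) [CommRing R] (F A : Type*)
    [LieRing F] [LieAlgebra R F] [LieRing A] [LieAlgebra R A]
    (φ : F →ₗ⁅R⁆ F) (hφ : ∀ f : F, φ (φ f) = φ f) (θ : F →ₗ⁅R⁆ A) :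
    ∀ f g : F,
      ((θ (φ ⁅φ f, g⁆), θ ⁅φ f, g⁆) : A × A) = (⁅θ (φ f), θ (φ g)⁆, ⁅θ (φ f), θ g⁆) ∧
      ((θ (φ ⁅f, φ g⁆), θ ⁅f, φ g⁆) : A × A) = (⁅θ (φ f), θ (φ g)⁆, ⁅θ f, θ (φ g)⁆) ∧
      ((θ (φ ⁅f, g⁆), θ ⁅f, g⁆) : A × A) = (⁅θ (φ f), θ (φ g)⁆, ⁅θ f, θ g⁆) := by
  intro f g
  refine ⟨?_, ?_, ?_⟩ <;>
    simp [LieHom.map_lie, hφ]
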